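/- For the Morrison–Pinkham matrix factorization, with c = (x, −y, −z, w) the first row of Φ, d = (0,0,0,1)ᵀ, and a, b the 4×4 matrices a = [[0,1,0,0],[−(y−λw),0,0,0],[0,0,0,1],[0,0,−(y−λw),0]] (specializing the universal a with u = y−λw, v = 0) and b = [[0,0,1,0],[0,0,0,−1],[−w,0,0,0],[0,w,0,0]], the relation a² + b·d·c + d·c·b + λb² + b³ ≡ 0 holds modulo the column space of Ψ (i.e., (a² + bdc + dcb + λb² + b³)·v lies in the image of Ψ for every v, as maps on the cokernel M = coker Ψ). -/
import Mathlib


open MvPolynomial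

noncomputable section

abbrev S13 : Type := MvPolynomial (Fin 4) ℂ

def w13 : S13 := X 0
def x13 : S13 := X 1
def y13 : S13 := X 2
def z13 : S13 := X 3

def f13 (l : ℂ) : S13 :=
  x13^2 + y13^3 + w13*z13^2 + w13^3*y13 - C l * w13 * y13^2 - C l * w13^4

abbrev R13 (l : ℂ) : Type := S13 ⧸ Ideal.span {f13 l}

def pi13 (l : ℂ) : S13 →+* R13 l := Ideal.Quotient.mk (Ideal.span {f13 l})

def PsiMP13 (l : ℂ) : Matrix (Fin 4) (Fin 4) S13 :=
  !![x13, y13, z13, -w13;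
     -(y13 - C l * w13)*y13, x13, (y13 - C l * w13)*w13, z13;
     -w13*z13, -w13^2, x13, -y13;
     (y13 - C l * w13)*w13^2, -w13*z13, (y13 - C l * w13)*y13, x13]

def aMP (l : ℂ) : Matrix (Fin 4) (Fin 4) S13 :=
  !![0, 1, 0, 0; -(y13 - C l * w13), 0, 0, 0; 0, 0, 0, 1; 0, 0, -(y13 - C l * w13), 0]

def bMP : Matrix (Fin 4) (Fin 4) S13 :=
  !![0, 0, 1, 0; 0, 0, 0, -1; -w13, 0, 0, 0; 0, w13, 0, 0]

/-- the column vector d -/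
def dMP : Fin 4 → S13 := ![0, 0, 0, 1]

/-- the row vector c (the first row of Φ) -/
def cMP : Fin 4 → S13 := ![x13, -y13, -z13, w13]

/-- the rank-one matrix d·c -/
def dcMP : Matrix (Fin 4) (Fin 4) S13 := Matrix.of fun i j => dMP i * cMP j

/-- the master relation matrix a² + b·d·c + d·c·b + λ b² + b³ -/
def EMP (l : ℂ) : Matrix (Fin 4) (Fin 4) S13 :=
  aMP l * aMP l + bMP * dcMP + dcMP * bMP + (C l : S13) • (bMP * bMP) + bMP * bMP * bMP

lemma vh0 : Matrix.vecHead (Matrix.vecTail (fun _ : Fin 4 => (0:S13))) = 0 := rfl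
lemma vt0 : Matrix.vecHead (Matrix.vecTail (Matrix.vecTail (fun _ : Fin 4 => (0:S13)))) = 0 := rfl

lemma dcMP_eq : dcMP = !![0,0,0,0; 0,0,0,0; 0,0,0,0; x13,-y13,-z13,w13] := by
  ext i j
  fin_cases i <;> fin_cases j <;> simp [dcMP, dMP, cMP]

set_option maxHeartbeats 4000000 in
theorem master_relation_mod_Psi (l : ℂ) :
    ∀ v : Fin 4 → R13 l,
      (((EMP l).map (pi13 l)).mulVec v) ∈
        LinearMap.range ((PsiMP13 l).map (pi13 l)).mulVecLin := by
  have key : EMP l = PsiMP13 l * !![0,0,0,0; -1,0,0,0; 0,0,0,0; 0,0,1,0] := by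
    show EMP l = PsiMP13 l * _
    rw [EMP, dcMP_eq]
    unfold PsiMP13 aMP bMP w13 x13 y13 z13
    ext i j
    fin_cases i <;> fin_cases j <;>
      simp [Matrix.mul_apply, Fin.sum_univ_four, Matrix.smul_apply, smul_eq_mul,
        -Matrix.vecCons_const] <;> ring
  intro v
  refine ⟨((!![0,0,0,0; -1,0,0,0; 0,0,0,0; 0,0,1,0] :
      Matrix (Fin 4) (Fin 4) S13).map (pi13 l)).mulVec v, ?_⟩
  rw [Matrix.mulVecLin_apply, Matrix.mulVec_mulVec, ← Matrix.map_mul, ← key]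

end
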